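/- Suppose a family of complex coefficients {R^σ_{k,j} : k,j ∈ ℤ²∖{0}, σ ∈ {±}} satisfies |R^σ_{k,j}| ≤ C·min(|k|,|j|)^μ · max(|k|,|j|)^{−ρ} for some μ, ρ, C > 0. Define the bilinear operator R(ʒ)v := Σ_{k,j,σ} R^σ_{k,j} ʒ^σ_k v_j e^{i(σk+j)·x}, where ʒ^+_k = ʒ_k, ʒ^-_k = conj(ʒ_k). Then for every s ≥ 2 + μ there is C_s > 0 such that ‖R(ʒ)v‖_{s+ρ} ≤ C_s (‖ʒ‖_{2+μ}‖v‖_s + ‖ʒ‖_s‖v‖_{2+μ}) for all ʒ ∈ H^s(𝕋²;ℂ) and v ∈ Ḣ^s(𝕋²;ℂ). -/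

import Mathlib

noncomputable section

/-- Euclidean norm on `ℤ²`. -/
def znrm (k : ℤ × ℤ) : ℝ := Real.sqrt ((k.1 : ℝ) ^ 2 + (k.2 : ℝ) ^ 2)

/-- Japanese bracket `⟨k⟩ = √(1+|k|²)` on `ℤ²`. -/
def hnrm (k : ℤ × ℤ) : ℝ := Real.sqrt (1 + (k.1 : ℝ) ^ 2 + (k.2 : ℝ) ^ 2)

/-- Sobolev norm of a sequence of Fourier coefficients. -/
def sob (s : ℝ) (z : ℤ × ℤ → ℂ) : ℝ :=
  Real.sqrt (∑' k : ℤ × ℤ, hnrm k ^ (2 * s) * ‖z k‖ ^ 2)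

open scoped ENNReal

lemma znrm_nonneg (k : ℤ × ℤ) : 0 ≤ znrm k := Real.sqrt_nonneg _

lemma znrm_neg (k : ℤ × ℤ) : znrm (-k) = znrm k := by
  simp [znrm]

lemma hnrm_neg (k : ℤ × ℤ) : hnrm (-k) = hnrm k := by
  simp [hnrm]

lemma one_le_hnrm (k : ℤ × ℤ) : 1 ≤ hnrm k := by
  rw [show (1:ℝ) = Real.sqrt 1 by simp [Real.sqrt_one]]
  apply Real.sqrt_le_sqrt; nlinarith [sq_nonneg ((k.1:ℝ)), sq_nonneg ((k.2:ℝ))]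

lemma hnrm_pos (k : ℤ × ℤ) : 0 < hnrm k := lt_of_lt_of_le one_pos (one_le_hnrm k)

lemma znrm_sq (k : ℤ × ℤ) : znrm k ^ 2 = (k.1 : ℝ) ^ 2 + (k.2 : ℝ) ^ 2 :=
  Real.sq_sqrt (by positivity)

lemma hnrm_sq (k : ℤ × ℤ) : hnrm k ^ 2 = 1 + (k.1 : ℝ) ^ 2 + (k.2 : ℝ) ^ 2 :=
  Real.sq_sqrt (by positivity)

lemma znrm_le_hnrm (k : ℤ × ℤ) : znrm k ≤ hnrm k := by
  apply Real.sqrt_le_sqrt; linarith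

lemma one_le_znrm {k : ℤ × ℤ} (hk : k ≠ 0) : 1 ≤ znrm k := by
  rw [show (1:ℝ) = Real.sqrt 1 by simp [Real.sqrt_one]]
  apply Real.sqrt_le_sqrt
  have h : k.1 ≠ 0 ∨ k.2 ≠ 0 := by
    by_contra h; push_neg at h; exact hk (Prod.ext h.1 h.2)
  rcases h with h | h
  · have h1 : (1:ℤ) ≤ k.1 ^ 2 := by nlinarith [Int.one_le_abs h, sq_abs k.1, abs_nonneg k.1]
    have h1' : (1:ℝ) ≤ (k.1:ℝ) ^ 2 := by exact_mod_cast h1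
    nlinarith [sq_nonneg ((k.2:ℝ))]
  · have h1 : (1:ℤ) ≤ k.2 ^ 2 := by nlinarith [Int.one_le_abs h, sq_abs k.2, abs_nonneg k.2]
    have h1' : (1:ℝ) ≤ (k.2:ℝ) ^ 2 := by exact_mod_cast h1
    nlinarith [sq_nonneg ((k.1:ℝ))]

lemma znrm_pos {k : ℤ × ℤ} (hk : k ≠ 0) : 0 < znrm k :=
  lt_of_lt_of_le one_pos (one_le_znrm hk)

lemma hnrm_le_two_znrm {k : ℤ × ℤ} (hk : k ≠ 0) : hnrm k ≤ 2 * znrm k := by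
  have h1 := one_le_znrm hk
  have h2 := znrm_sq k
  have h3 : hnrm k = Real.sqrt (1 + znrm k ^ 2) := by rw [h2, hnrm]; ring_nf
  rw [h3]
  have : (1 : ℝ) + znrm k ^ 2 ≤ (2 * znrm k) ^ 2 := by nlinarith
  calc Real.sqrt (1 + znrm k ^ 2) ≤ Real.sqrt ((2 * znrm k) ^ 2) := Real.sqrt_le_sqrt this
    _ = 2 * znrm k := Real.sqrt_sq (by linarith)

lemma znrm_add_le (k j : ℤ × ℤ) : znrm (k + j) ≤ znrm k + znrm j := by
  have e : ∀ m : ℤ × ℤ, znrm m = ‖(⟨(m.1 : ℝ), (m.2 : ℝ)⟩ : ℂ)‖ := by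
    intro m
    rw [Complex.norm_def, Complex.normSq_mk, znrm]
    ring_nf
  rw [e, e, e]
  have : (⟨((k+j).1 : ℝ), ((k+j).2 : ℝ)⟩ : ℂ) = ⟨(k.1:ℝ), (k.2:ℝ)⟩ + ⟨(j.1:ℝ), (j.2:ℝ)⟩ := by
    apply Complex.ext <;> push_cast <;> simp
  rw [this]
  exact norm_add_le _ _

lemma hnrm_add_le (k j : ℤ × ℤ) : hnrm (k + j) ≤ hnrm k + hnrm j := by
  have h1 := znrm_add_le k j
  have h2 := znrm_le_hnrm k
  have h3 := znrm_le_hnrm j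
  have h4 := one_le_hnrm k
  have h5 := one_le_hnrm j
  have h6 := znrm_nonneg (k + j)
  have e : ∀ m : ℤ × ℤ, hnrm m ^ 2 = 1 + znrm m ^ 2 := by
    intro m; rw [hnrm_sq, znrm_sq]; ring
  have h7 : hnrm (k + j) ^ 2 ≤ (hnrm k + hnrm j) ^ 2 := by
    rw [e]
    have := e k; have := e j
    nlinarith [znrm_nonneg k, znrm_nonneg j]
  have h8 : (0:ℝ) ≤ hnrm k + hnrm j := by linarith
  nlinarith [hnrm_pos (k + j)]

lemma etwo (x : ℝ≥0∞) : x ^ (2:ℝ) = x * x := by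
  rw [show (2:ℝ) = ((2:ℕ):ℝ) by norm_num, ENNReal.rpow_natCast, sq]

lemma ecs {ι : Type*} (f g : ι → ℝ≥0∞) :
    ∑' i, f i * g i ≤ (∑' i, f i ^ (2:ℝ)) ^ (1/2:ℝ) * (∑' i, g i ^ (2:ℝ)) ^ (1/2:ℝ) := by
  rw [ENNReal.tsum_eq_iSup_sum]
  refine iSup_le fun t => ?_
  refine (ENNReal.inner_le_Lp_mul_Lq t f g (p := 2) (q := 2) ⟨by norm_num, by norm_num, by norm_num⟩).trans ?_
  norm_num only
  gcongr
  · exact ENNReal.sum_le_tsum t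
  · exact ENNReal.sum_le_tsum t

lemma ehalf (x : ℝ≥0∞) : (x ^ (2:ℝ)) ^ (1/2:ℝ) = x := by
  rw [← ENNReal.rpow_mul]; norm_num

lemma esqrt_mono {x y : ℝ≥0∞} (h : x ≤ y) : x ^ (1/2:ℝ) ≤ y ^ (1/2:ℝ) :=
  ENNReal.rpow_le_rpow h (by norm_num)

lemma ehalf2 (x : ℝ≥0∞) : (x ^ (1/2:ℝ)) ^ (2:ℝ) = x := by
  rw [← ENNReal.rpow_mul]; norm_num

lemma esqrt_add (x y : ℝ≥0∞) : (x + y) ^ (1/2:ℝ) ≤ x ^ (1/2:ℝ) + y ^ (1/2:ℝ) :=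
  ENNReal.rpow_add_le_add_rpow x y (by norm_num) (by norm_num)

lemma esq_add_le (a b : ℝ≥0∞) : (a + b) ^ (2:ℝ) ≤ 4 * (a ^ (2:ℝ) + b ^ (2:ℝ)) := by
  rcases le_total a b with h | h
  · calc (a + b) ^ (2:ℝ) ≤ (b + b) ^ (2:ℝ) := ENNReal.rpow_le_rpow (by gcongr) (by norm_num)
      _ = 4 * b ^ (2:ℝ) := by rw [← two_mul, etwo, etwo]; ring
      _ ≤ 4 * (a ^ (2:ℝ) + b ^ (2:ℝ)) := by gcongr; exact le_add_self
  · calc (a + b) ^ (2:ℝ) ≤ (a + a) ^ (2:ℝ) := ENNReal.rpow_le_rpow (by gcongr) (by norm_num)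
      _ = 4 * a ^ (2:ℝ) := by rw [← two_mul, etwo, etwo]; ring
      _ ≤ 4 * (a ^ (2:ℝ) + b ^ (2:ℝ)) := by gcongr; exact le_self_add

lemma conv_l2 (p q : ℤ × ℤ → ℝ≥0∞) :
    ∑' ℓ : ℤ × ℤ, (∑' k : ℤ × ℤ, p k * q (ℓ - k)) ^ (2:ℝ)
      ≤ (∑' k : ℤ × ℤ, p k) ^ (2:ℝ) * ∑' j : ℤ × ℤ, q j ^ (2:ℝ) := by
  have step : ∀ ℓ : ℤ × ℤ, (∑' k, p k * q (ℓ - k)) ^ (2:ℝ)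
      ≤ (∑' k, p k) * ∑' k, p k * q (ℓ - k) ^ (2:ℝ) := by
    intro ℓ
    have h := ecs (fun k => (p k) ^ (1/2:ℝ)) (fun k => (p k) ^ (1/2:ℝ) * q (ℓ - k))
    have e1 : ∀ k : ℤ × ℤ, (p k) ^ (1/2:ℝ) * ((p k) ^ (1/2:ℝ) * q (ℓ - k)) = p k * q (ℓ - k) := by
      intro k; rw [← mul_assoc, ← etwo, ehalf2]
    have e2 : ∀ k : ℤ × ℤ, ((p k) ^ (1/2:ℝ)) ^ (2:ℝ) = p k := fun k => ehalf2 _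
    have e3 : ∀ k : ℤ × ℤ, ((p k) ^ (1/2:ℝ) * q (ℓ - k)) ^ (2:ℝ)
        = p k * q (ℓ - k) ^ (2:ℝ) := by
      intro k
      rw [ENNReal.mul_rpow_of_nonneg _ _ (by norm_num : (0:ℝ) ≤ 2), e2]
    simp only [e1, e2, e3] at h
    calc (∑' k, p k * q (ℓ - k)) ^ (2:ℝ)
        ≤ ((∑' k, p k) ^ (1/2:ℝ) * (∑' k, p k * q (ℓ - k) ^ (2:ℝ)) ^ (1/2:ℝ)) ^ (2:ℝ) :=
          ENNReal.rpow_le_rpow h (by norm_num)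
      _ = (∑' k, p k) * ∑' k, p k * q (ℓ - k) ^ (2:ℝ) := by
          rw [ENNReal.mul_rpow_of_nonneg _ _ (by norm_num : (0:ℝ) ≤ 2), ehalf2, ehalf2]
  calc ∑' ℓ : ℤ × ℤ, (∑' k, p k * q (ℓ - k)) ^ (2:ℝ)
      ≤ ∑' ℓ : ℤ × ℤ, (∑' k, p k) * ∑' k, p k * q (ℓ - k) ^ (2:ℝ) := ENNReal.tsum_le_tsum step
    _ = (∑' k, p k) * ∑' ℓ : ℤ × ℤ, ∑' k, p k * q (ℓ - k) ^ (2:ℝ) := ENNReal.tsum_mul_left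
    _ = (∑' k, p k) * ∑' k : ℤ × ℤ, ∑' ℓ : ℤ × ℤ, p k * q (ℓ - k) ^ (2:ℝ) := by
        rw [ENNReal.tsum_comm]
    _ = (∑' k, p k) * ∑' k : ℤ × ℤ, p k * ∑' ℓ : ℤ × ℤ, q (ℓ - k) ^ (2:ℝ) := by
        congr 1; exact tsum_congr fun k => ENNReal.tsum_mul_left
    _ = (∑' k, p k) * ∑' k : ℤ × ℤ, p k * ∑' j : ℤ × ℤ, q j ^ (2:ℝ) := by
        congr 1; refine tsum_congr fun k => ?_
        congr 1
        exact Equiv.tsum_eq (Equiv.subRight k) (fun j => q j ^ (2:ℝ))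
    _ = (∑' k, p k) ^ (2:ℝ) * ∑' j : ℤ × ℤ, q j ^ (2:ℝ) := by
        rw [ENNReal.tsum_mul_right, etwo]; ring

noncomputable section
open scoped ENNReal

-- finiteness of sum of hnrm^{-4}
lemma lam_fin : ∑' k : ℤ × ℤ, ENNReal.ofReal (hnrm k ^ (-(4:ℝ))) ≠ ⊤ := by
  classical
  have hsum1 : Summable (fun n : ℤ => (1:ℝ)/(1+(n:ℝ)^2)) := by
    have h2 : Summable (fun n : ℤ => (1:ℝ)/(n:ℝ)^2) :=
      Real.summable_one_div_int_pow.mpr one_lt_two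
    have h3 : Summable (Function.update (fun n : ℤ => (1:ℝ)/(n:ℝ)^2) 0 1) := h2.update 0 1
    refine h3.of_nonneg_of_le (fun n => by positivity) (fun n => ?_)
    rcases eq_or_ne n 0 with rfl | hn
    · simp [Function.update]
    · rw [Function.update_of_ne hn]
      have hn1 : (1:ℝ) ≤ (n:ℝ)^2 := by
        have := Int.one_le_abs hn
        have : (1:ℝ) ≤ |(n:ℝ)| := by exact_mod_cast (by simpa using this)
        nlinarith [sq_abs (n:ℝ)]
      rw [div_le_div_iff₀ (by positivity) (by positivity)]
      nlinarith
  have hb : ∀ k : ℤ × ℤ, ENNReal.ofReal (hnrm k ^ (-(4:ℝ)))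
      ≤ ENNReal.ofReal ((1:ℝ)/(1+(k.1:ℝ)^2)) * ENNReal.ofReal ((1:ℝ)/(1+(k.2:ℝ)^2)) := by
    intro k
    rw [← ENNReal.ofReal_mul (by positivity)]
    apply ENNReal.ofReal_le_ofReal
    have h4 : hnrm k ^ (-(4:ℝ)) = ((1 + (k.1:ℝ)^2 + (k.2:ℝ)^2)^2)⁻¹ := by
      have hp := hnrm_pos k
      rw [show (-(4:ℝ)) = -(4:ℝ) from rfl, Real.rpow_neg hp.le]
      congr 1
      rw [show (4:ℝ) = ((4:ℕ):ℝ) by norm_num, Real.rpow_natCast]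
      have := hnrm_sq k
      nlinarith [Real.sqrt_nonneg (1 + (k.1:ℝ)^2 + (k.2:ℝ)^2)]
    rw [h4, div_mul_div_comm, one_mul]
    rw [inv_eq_one_div]
    rw [div_le_div_iff₀ (by positivity) (by positivity)]
    nlinarith [sq_nonneg ((k.1:ℝ)*(k.2:ℝ)), sq_nonneg ((k.1:ℝ)^2*(k.2:ℝ)), sq_nonneg ((k.1:ℝ)*(k.2:ℝ)^2), sq_nonneg ((k.1:ℝ)^2*(k.2:ℝ)^2), sq_nonneg (k.1:ℝ), sq_nonneg (k.2:ℝ)]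
  have hfin : (∑' n : ℤ, ENNReal.ofReal ((1:ℝ)/(1+(n:ℝ)^2))) ≠ ⊤ := by
    rw [← ENNReal.ofReal_tsum_of_nonneg (fun n => by positivity) hsum1]
    exact ENNReal.ofReal_ne_top
  rw [← lt_top_iff_ne_top]
  calc ∑' k : ℤ × ℤ, ENNReal.ofReal (hnrm k ^ (-(4:ℝ)))
      ≤ ∑' k : ℤ × ℤ, ENNReal.ofReal ((1:ℝ)/(1+(k.1:ℝ)^2)) * ENNReal.ofReal ((1:ℝ)/(1+(k.2:ℝ)^2)) :=
        ENNReal.tsum_le_tsum hb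
    _ = ∑' (a : ℤ), ∑' (b : ℤ), ENNReal.ofReal ((1:ℝ)/(1+(a:ℝ)^2)) * ENNReal.ofReal ((1:ℝ)/(1+(b:ℝ)^2)) :=
        ENNReal.tsum_prod (f := fun (a b : ℤ) => ENNReal.ofReal ((1:ℝ)/(1+(a:ℝ)^2)) * ENNReal.ofReal ((1:ℝ)/(1+(b:ℝ)^2)))
    _ = (∑' n : ℤ, ENNReal.ofReal ((1:ℝ)/(1+(n:ℝ)^2))) * (∑' n : ℤ, ENNReal.ofReal ((1:ℝ)/(1+(n:ℝ)^2))) := by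
        simp_rw [ENNReal.tsum_mul_left]
        rw [ENNReal.tsum_mul_right]
    _ < ⊤ := ENNReal.mul_lt_top hfin.lt_top hfin.lt_top

lemma enn_tsum_norm {ι : Type*} (f : ι → ℂ) :
    (‖∑' i, f i‖₊ : ℝ≥0∞) ≤ ∑' i, (‖f i‖₊ : ℝ≥0∞) := by
  by_cases h : Summable fun i => ‖f i‖₊
  · rw [← ENNReal.coe_tsum h]
    exact_mod_cast nnnorm_tsum_le h
  · have : ∑' i, (‖f i‖₊ : ℝ≥0∞) = ⊤ := by
      by_contra hh; exact h (ENNReal.tsum_coe_ne_top_iff_summable.mp hh)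
    simp [this]

lemma summable_of_ofReal {ι : Type*} {f : ι → ℝ} (hf : ∀ i, 0 ≤ f i)
    (h : ∑' i, ENNReal.ofReal (f i) ≠ ⊤) : Summable f := by
  have h2 : Summable (fun i => (f i).toNNReal) := by
    apply ENNReal.tsum_coe_ne_top_iff_summable.mp
    exact h
  exact (NNReal.summable_coe.mpr h2).congr fun i => Real.coe_toNNReal _ (hf i)

-- ℓ¹ Cauchy-Schwarz bound
lemma l1_bound (t : ℝ) (A : ℤ × ℤ → ℝ≥0∞) :
    ∑' k : ℤ × ℤ, ENNReal.ofReal (hnrm k ^ t) * A k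
      ≤ (∑' k : ℤ × ℤ, ENNReal.ofReal (hnrm k ^ (-(4:ℝ)))) ^ (1/2:ℝ) *
        (∑' k : ℤ × ℤ, (ENNReal.ofReal (hnrm k ^ (t+2)) * A k) ^ (2:ℝ)) ^ (1/2:ℝ) := by
  have e1 : ∀ k : ℤ × ℤ, ENNReal.ofReal (hnrm k ^ t) * A k
      = ENNReal.ofReal (hnrm k ^ (-(2:ℝ))) * (ENNReal.ofReal (hnrm k ^ (t+2)) * A k) := by
    intro k
    rw [← mul_assoc, ← ENNReal.ofReal_mul (Real.rpow_nonneg (hnrm_pos k).le _),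
      ← Real.rpow_add (hnrm_pos k)]
    norm_num
  simp_rw [e1]
  have e2 : ∀ k : ℤ × ℤ, (ENNReal.ofReal (hnrm k ^ (-(2:ℝ)))) ^ (2:ℝ)
      = ENNReal.ofReal (hnrm k ^ (-(4:ℝ))) := by
    intro k
    rw [ENNReal.ofReal_rpow_of_nonneg (Real.rpow_nonneg (hnrm_pos k).le _) (by norm_num)]
    congr 1
    rw [← Real.rpow_mul (hnrm_pos k).le]
    norm_num
  refine (ecs _ _).trans ?_
  rw [tsum_congr e2]

-- bridge between ENNReal sum and sob
def sob' (t : ℝ) (z : ℤ × ℤ → ℂ) : ℝ≥0∞ :=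
  (∑' k : ℤ × ℤ, (ENNReal.ofReal (hnrm k ^ t) * (‖z k‖₊ : ℝ≥0∞)) ^ (2:ℝ)) ^ (1/2:ℝ)


lemma sob'_pointwise (t : ℝ) (z : ℤ × ℤ → ℂ) (k : ℤ × ℤ) :
    (ENNReal.ofReal (hnrm k ^ t) * (‖z k‖₊ : ℝ≥0∞)) ^ (2:ℝ)
      = ENNReal.ofReal (hnrm k ^ (2*t) * ‖z k‖ ^ 2) := by
  rw [← enorm_eq_nnnorm, ← ofReal_norm, ← ENNReal.ofReal_mul (Real.rpow_nonneg (hnrm_pos k).le _),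
    ENNReal.ofReal_rpow_of_nonneg
      (mul_nonneg (Real.rpow_nonneg (hnrm_pos k).le _) (norm_nonneg _)) (by norm_num)]
  congr 1
  rw [Real.mul_rpow (Real.rpow_nonneg (hnrm_pos k).le _) (norm_nonneg _)]
  rw [← Real.rpow_mul (hnrm_pos k).le, ← Real.rpow_natCast ‖z k‖ 2]
  norm_num [mul_comm, Real.rpow_natCast]

lemma sob'_eq (t : ℝ) (z : ℤ × ℤ → ℂ)
    (hz : Summable (fun k => hnrm k ^ (2*t) * ‖z k‖ ^ 2)) :
    sob' t z = ENNReal.ofReal (sob t z) := by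
  unfold sob' sob
  simp_rw [sob'_pointwise]
  have nn : ∀ k : ℤ × ℤ, 0 ≤ hnrm k ^ (2*t) * ‖z k‖ ^ 2 := fun k =>
    mul_nonneg (Real.rpow_nonneg (hnrm_pos k).le _) (pow_nonneg (norm_nonneg _) 2)
  rw [← ENNReal.ofReal_tsum_of_nonneg nn hz]
  rw [ENNReal.ofReal_rpow_of_nonneg (tsum_nonneg nn) (by norm_num)]
  rw [Real.sqrt_eq_rpow]

lemma hnrm_mono {k j : ℤ × ℤ} (h : znrm k ≤ znrm j) : hnrm k ≤ hnrm j := by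
  apply Real.sqrt_le_sqrt
  have h1 : znrm k ^ 2 ≤ znrm j ^ 2 := pow_le_pow_left₀ (znrm_nonneg k) h 2
  rw [znrm_sq, znrm_sq] at h1; linarith

lemma klem {μ ρ C s : ℝ} (hμ : 0 < μ) (hρ : 0 < ρ) (hC : 0 < C) (hs : 2 + μ ≤ s)
    {k j : ℤ × ℤ} (hk : k ≠ 0) (hj : j ≠ 0) (hkj : znrm k ≤ znrm j) :
    hnrm (k + j) ^ (s + ρ) * (C * min (znrm k) (znrm j) ^ μ * max (znrm k) (znrm j) ^ (-ρ))
      ≤ C * 2 ^ (s + 2 * ρ) * (hnrm k ^ μ * hnrm j ^ s) := by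
  rw [min_eq_left hkj, max_eq_right hkj]
  have hjp := hnrm_pos j
  have hkp := hnrm_pos k
  have hzjp := znrm_pos hj
  have hsp : (0:ℝ) < s := by linarith
  have b1 : hnrm (k + j) ^ (s + ρ) ≤ 2 ^ (s + ρ) * hnrm j ^ (s + ρ) := by
    have h1 : hnrm (k + j) ≤ 2 * hnrm j := by
      have := hnrm_add_le k j
      have := hnrm_mono hkj
      linarith
    calc hnrm (k + j) ^ (s + ρ) ≤ (2 * hnrm j) ^ (s + ρ) :=
          Real.rpow_le_rpow (hnrm_pos _).le h1 (by linarith)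
      _ = 2 ^ (s + ρ) * hnrm j ^ (s + ρ) := Real.mul_rpow (by norm_num) hjp.le
  have b2 : znrm k ^ μ ≤ hnrm k ^ μ :=
    Real.rpow_le_rpow (znrm_nonneg k) (znrm_le_hnrm k) hμ.le
  have b3 : znrm j ^ (-ρ) ≤ 2 ^ ρ * hnrm j ^ (-ρ) := by
    have h1 : hnrm j ^ ρ ≤ 2 ^ ρ * znrm j ^ ρ := by
      calc hnrm j ^ ρ ≤ (2 * znrm j) ^ ρ :=
            Real.rpow_le_rpow hjp.le (hnrm_le_two_znrm hj) hρ.le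
        _ = 2 ^ ρ * znrm j ^ ρ := Real.mul_rpow (by norm_num) (znrm_nonneg j)
    have p1 : (0:ℝ) < znrm j ^ ρ := Real.rpow_pos_of_pos hzjp ρ
    have p2 : (0:ℝ) < hnrm j ^ ρ := Real.rpow_pos_of_pos hjp ρ
    rw [Real.rpow_neg (znrm_nonneg j), Real.rpow_neg hjp.le]
    rw [inv_eq_one_div, inv_eq_one_div, mul_one_div, div_le_div_iff₀ p1 p2]
    nlinarith
  have hnn2 : (0:ℝ) ≤ (2:ℝ) ^ (s + ρ) := (Real.rpow_pos_of_pos two_pos _).le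
  calc hnrm (k + j) ^ (s + ρ) * (C * znrm k ^ μ * znrm j ^ (-ρ))
      ≤ (2 ^ (s + ρ) * hnrm j ^ (s + ρ)) * (C * hnrm k ^ μ * (2 ^ ρ * hnrm j ^ (-ρ))) := by
        have n1 : 0 ≤ znrm j ^ (-ρ) := Real.rpow_nonneg (znrm_nonneg j) _
        have n2 : 0 ≤ C * znrm k ^ μ := mul_nonneg hC.le (Real.rpow_nonneg (znrm_nonneg k) _)
        have n3 : 0 ≤ hnrm (k + j) ^ (s + ρ) := Real.rpow_nonneg (hnrm_pos _).le _
        have n4 : 0 ≤ 2 ^ (s + ρ) * hnrm j ^ (s + ρ) :=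
          mul_nonneg hnn2 (Real.rpow_nonneg hjp.le _)
        apply mul_le_mul b1 _ (mul_nonneg n2 n1) n4
        exact mul_le_mul (mul_le_mul_of_nonneg_left b2 hC.le) b3 n1
          (mul_nonneg hC.le (Real.rpow_nonneg hkp.le _))
    _ = (2 ^ (s + ρ) * 2 ^ ρ) * (hnrm j ^ (s + ρ) * hnrm j ^ (-ρ)) * (C * hnrm k ^ μ) := by
        ring
    _ = C * 2 ^ (s + 2 * ρ) * (hnrm k ^ μ * hnrm j ^ s) := by
        rw [← Real.rpow_add two_pos, ← Real.rpow_add hjp]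
        rw [show s + ρ + ρ = s + 2 * ρ by ring, show s + ρ + -ρ = s by ring]
        ring

lemma key_both {μ ρ C s : ℝ} (hμ : 0 < μ) (hρ : 0 < ρ) (hC : 0 < C) (hs : 2 + μ ≤ s)
    {k j : ℤ × ℤ} (hk : k ≠ 0) (hj : j ≠ 0) :
    hnrm (k + j) ^ (s + ρ) * (C * min (znrm k) (znrm j) ^ μ * max (znrm k) (znrm j) ^ (-ρ))
      ≤ C * 2 ^ (s + 2 * ρ) * (hnrm k ^ μ * hnrm j ^ s + hnrm k ^ s * hnrm j ^ μ) := by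
  have hsp : (0:ℝ) < s := by linarith
  rcases le_total (znrm k) (znrm j) with h | h
  · have := klem hμ hρ hC hs hk hj h
    have pos : (0:ℝ) ≤ C * 2 ^ (s + 2 * ρ) * (hnrm k ^ s * hnrm j ^ μ) :=
      mul_nonneg (mul_nonneg hC.le (Real.rpow_nonneg (by norm_num) _))
        (mul_nonneg (Real.rpow_nonneg (hnrm_pos _).le _) (Real.rpow_nonneg (hnrm_pos _).le _))
    linarith [mul_add (C * 2 ^ (s + 2 * ρ)) (hnrm k ^ μ * hnrm j ^ s) (hnrm k ^ s * hnrm j ^ μ)]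
  · have h2 := klem hμ hρ hC hs hj hk h
    rw [min_comm, max_comm, add_comm j k] at h2
    have pos : (0:ℝ) ≤ C * 2 ^ (s + 2 * ρ) * (hnrm k ^ μ * hnrm j ^ s) :=
      mul_nonneg (mul_nonneg hC.le (Real.rpow_nonneg (by norm_num) _))
        (mul_nonneg (Real.rpow_nonneg (hnrm_pos _).le _) (Real.rpow_nonneg (hnrm_pos _).le _))
    linarith [mul_add (C * 2 ^ (s + 2 * ρ)) (hnrm k ^ μ * hnrm j ^ s) (hnrm k ^ s * hnrm j ^ μ)]

def ehn (t : ℝ) (k : ℤ × ℤ) : ℝ≥0∞ := ENNReal.ofReal (hnrm k ^ t)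

lemma ehn_neg (t : ℝ) (k : ℤ × ℤ) : ehn t (-k) = ehn t k := by rw [ehn, ehn, hnrm_neg]

lemma sob'_def (t : ℝ) (z : ℤ × ℤ → ℂ) :
    sob' t z = (∑' k : ℤ × ℤ, (ehn t k * (‖z k‖₊ : ℝ≥0∞)) ^ (2:ℝ)) ^ (1/2:ℝ) := rfl

lemma h8half : (8:ℝ≥0∞) ^ (1/2:ℝ) ≤ 3 := by
  have h : (8:ℝ≥0∞) ≤ 3 ^ (2:ℝ) := by rw [etwo]; norm_num
  calc (8:ℝ≥0∞) ^ (1/2:ℝ) ≤ (3 ^ (2:ℝ)) ^ (1/2:ℝ) := esqrt_mono h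
    _ = 3 := ehalf _

-- splitting off the symmetrized coefficient
lemma Asq_le (t : ℝ) (z : ℤ × ℤ → ℂ) :
    (∑' k : ℤ × ℤ, (ehn t k * ((‖z k‖₊ : ℝ≥0∞) + (‖z (-k)‖₊ : ℝ≥0∞))) ^ (2:ℝ)) ^ (1/2:ℝ)
      ≤ 3 * sob' t z := by
  have h1 : ∀ k : ℤ × ℤ, (ehn t k * ((‖z k‖₊ : ℝ≥0∞) + (‖z (-k)‖₊ : ℝ≥0∞))) ^ (2:ℝ)
      ≤ 4 * ((ehn t k * (‖z k‖₊ : ℝ≥0∞)) ^ (2:ℝ) + (ehn t k * (‖z (-k)‖₊ : ℝ≥0∞)) ^ (2:ℝ)) := by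
    intro k; rw [mul_add]; exact esq_add_le _ _
  have h2 : ∑' k : ℤ × ℤ, (ehn t k * (‖z (-k)‖₊ : ℝ≥0∞)) ^ (2:ℝ)
      = ∑' k : ℤ × ℤ, (ehn t k * (‖z k‖₊ : ℝ≥0∞)) ^ (2:ℝ) := by
    rw [← (Equiv.neg (ℤ × ℤ)).tsum_eq (fun k => (ehn t k * (‖z k‖₊ : ℝ≥0∞)) ^ (2:ℝ))]
    refine tsum_congr fun k => ?_
    simp only [Equiv.neg_apply, ehn_neg]
  have h3 : ∑' k : ℤ × ℤ, (ehn t k * ((‖z k‖₊ : ℝ≥0∞) + (‖z (-k)‖₊ : ℝ≥0∞))) ^ (2:ℝ)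
      ≤ 8 * ∑' k : ℤ × ℤ, (ehn t k * (‖z k‖₊ : ℝ≥0∞)) ^ (2:ℝ) := by
    calc ∑' k : ℤ × ℤ, (ehn t k * ((‖z k‖₊ : ℝ≥0∞) + (‖z (-k)‖₊ : ℝ≥0∞))) ^ (2:ℝ)
        ≤ ∑' k : ℤ × ℤ, 4 * ((ehn t k * (‖z k‖₊ : ℝ≥0∞)) ^ (2:ℝ)
            + (ehn t k * (‖z (-k)‖₊ : ℝ≥0∞)) ^ (2:ℝ)) := ENNReal.tsum_le_tsum h1
      _ = 4 * (∑' k : ℤ × ℤ, (ehn t k * (‖z k‖₊ : ℝ≥0∞)) ^ (2:ℝ)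
            + ∑' k : ℤ × ℤ, (ehn t k * (‖z (-k)‖₊ : ℝ≥0∞)) ^ (2:ℝ)) := by
          rw [ENNReal.tsum_mul_left, ENNReal.tsum_add]
      _ = 8 * ∑' k : ℤ × ℤ, (ehn t k * (‖z k‖₊ : ℝ≥0∞)) ^ (2:ℝ) := by
          rw [h2, ← two_mul, ← mul_assoc]; norm_num
  calc (∑' k : ℤ × ℤ, (ehn t k * ((‖z k‖₊ : ℝ≥0∞) + (‖z (-k)‖₊ : ℝ≥0∞))) ^ (2:ℝ)) ^ (1/2:ℝ)
      ≤ (8 * ∑' k : ℤ × ℤ, (ehn t k * (‖z k‖₊ : ℝ≥0∞)) ^ (2:ℝ)) ^ (1/2:ℝ) := esqrt_mono h3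
    _ = (8:ℝ≥0∞) ^ (1/2:ℝ) * sob' t z := by
        rw [ENNReal.mul_rpow_of_nonneg _ _ (by norm_num : (0:ℝ) ≤ 1/2), sob'_def]
    _ ≤ 3 * sob' t z := by gcongr; exact h8half

def Lam : ℝ≥0∞ := (∑' k : ℤ × ℤ, ENNReal.ofReal (hnrm k ^ (-(4:ℝ)))) ^ (1/2:ℝ)

lemma Lam_ne_top : Lam ≠ ⊤ :=
  ENNReal.rpow_ne_top_of_nonneg (by norm_num) lam_fin

lemma l1A {t u : ℝ} (hu : t + 2 = u) (A : ℤ × ℤ → ℝ≥0∞) :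
    ∑' k : ℤ × ℤ, ehn t k * A k ≤ Lam * (∑' k : ℤ × ℤ, (ehn u k * A k) ^ (2:ℝ)) ^ (1/2:ℝ) := by
  subst hu
  exact l1_bound t A


set_option maxHeartbeats 1000000 in
theorem stmt6 (μ ρ C : ℝ) (hμ : 0 < μ) (hρ : 0 < ρ) (hC : 0 < C)
    (Rp Rm : ℤ × ℤ → ℤ × ℤ → ℂ)
    (hzero : ∀ k j : ℤ × ℤ, k = 0 ∨ j = 0 → Rp k j = 0 ∧ Rm k j = 0)
    (hbound : ∀ k j : ℤ × ℤ, k ≠ 0 → j ≠ 0 →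
      ‖Rp k j‖ ≤ C * min (znrm k) (znrm j) ^ μ * max (znrm k) (znrm j) ^ (-ρ) ∧
      ‖Rm k j‖ ≤ C * min (znrm k) (znrm j) ^ μ * max (znrm k) (znrm j) ^ (-ρ)) :
    ∀ s : ℝ, 2 + μ ≤ s → ∃ Cs > 0, ∀ z v : ℤ × ℤ → ℂ, z 0 = 0 → v 0 = 0 →
      Summable (fun k => hnrm k ^ (2 * s) * ‖z k‖ ^ 2) →
      Summable (fun k => hnrm k ^ (2 * s) * ‖v k‖ ^ 2) →
      sob (s + ρ) (fun ℓ => ∑' k : ℤ × ℤ,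
          (Rp k (ℓ - k) * z k * v (ℓ - k) +
            Rm k (ℓ + k) * (starRingEnd ℂ) (z k) * v (ℓ + k)))
        ≤ Cs * (sob (2 + μ) z * sob s v + sob s z * sob (2 + μ) v) := by
  intro s hs
  have hs0 : (0:ℝ) < s := by linarith
  set Kc := C * 2 ^ (s + 2 * ρ) with hKcdef
  have hKc0 : 0 < Kc := mul_pos hC (Real.rpow_pos_of_pos two_pos _)
  have hLamReal : 0 ≤ Lam.toReal := ENNReal.toReal_nonneg
  refine ⟨12 * Kc * Lam.toReal + 1, by positivity, ?_⟩
  intro z v hz0 hv0 hzs hvs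
  -- nonnegativity of RHS of coefficient bounds
  have RHSnn : ∀ k j : ℤ × ℤ, 0 ≤ Kc * (hnrm k ^ μ * hnrm j ^ s + hnrm k ^ s * hnrm j ^ μ) :=
    fun k j => mul_nonneg hKc0.le (add_nonneg
      (mul_nonneg (Real.rpow_nonneg (hnrm_pos _).le _) (Real.rpow_nonneg (hnrm_pos _).le _))
      (mul_nonneg (Real.rpow_nonneg (hnrm_pos _).le _) (Real.rpow_nonneg (hnrm_pos _).le _)))
  -- real coefficient bounds
  have cb_p : ∀ k j : ℤ × ℤ, hnrm (k + j) ^ (s + ρ) * ‖Rp k j‖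
      ≤ Kc * (hnrm k ^ μ * hnrm j ^ s + hnrm k ^ s * hnrm j ^ μ) := by
    intro k j
    by_cases hk : k = 0
    · rw [(hzero k j (Or.inl hk)).1]; simpa using RHSnn k j
    by_cases hj : j = 0
    · rw [(hzero k j (Or.inr hj)).1]; simpa using RHSnn k j
    calc hnrm (k+j) ^ (s+ρ) * ‖Rp k j‖
        ≤ hnrm (k+j) ^ (s+ρ) * (C * min (znrm k) (znrm j) ^ μ * max (znrm k) (znrm j) ^ (-ρ)) :=
          mul_le_mul_of_nonneg_left (hbound k j hk hj).1 (Real.rpow_nonneg (hnrm_pos _).le _)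
      _ ≤ _ := key_both hμ hρ hC hs hk hj
  have cb_m : ∀ k j : ℤ × ℤ, hnrm (-k + j) ^ (s + ρ) * ‖Rm k j‖
      ≤ Kc * (hnrm k ^ μ * hnrm j ^ s + hnrm k ^ s * hnrm j ^ μ) := by
    intro k j
    by_cases hk : k = 0
    · rw [(hzero k j (Or.inl hk)).2]; simpa using RHSnn k j
    by_cases hj : j = 0
    · rw [(hzero k j (Or.inr hj)).2]; simpa using RHSnn k j
    have h1 := key_both (k := -k) (j := j) hμ hρ hC hs (neg_ne_zero.mpr hk) hj
    rw [znrm_neg, hnrm_neg] at h1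
    calc hnrm (-k+j) ^ (s+ρ) * ‖Rm k j‖
        ≤ hnrm (-k+j) ^ (s+ρ) * (C * min (znrm k) (znrm j) ^ μ * max (znrm k) (znrm j) ^ (-ρ)) :=
          mul_le_mul_of_nonneg_left (hbound k j hk hj).2 (Real.rpow_nonneg (hnrm_pos _).le _)
      _ ≤ _ := h1
  set EK := ENNReal.ofReal Kc with hEK
  have rpnn : ∀ (t : ℝ) (k : ℤ × ℤ), 0 ≤ hnrm k ^ t := fun t k => Real.rpow_nonneg (hnrm_pos k).le t
  have ofrhs : ∀ k j : ℤ × ℤ,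
      ENNReal.ofReal (Kc * (hnrm k ^ μ * hnrm j ^ s + hnrm k ^ s * hnrm j ^ μ))
        = EK * (ehn μ k * ehn s j + ehn s k * ehn μ j) := by
    intro k j
    rw [ENNReal.ofReal_mul hKc0.le,
      ENNReal.ofReal_add (mul_nonneg (rpnn _ _) (rpnn _ _)) (mul_nonneg (rpnn _ _) (rpnn _ _)),
      ENNReal.ofReal_mul (rpnn _ _), ENNReal.ofReal_mul (rpnn _ _)]
    rfl
  have ekey1 : ∀ ℓ k : ℤ × ℤ,
      ehn (s+ρ) ℓ * (‖Rp k (ℓ-k) * z k * v (ℓ-k)‖₊ : ℝ≥0∞)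
      ≤ EK * ((ehn μ k * ((‖z k‖₊ : ℝ≥0∞) + ‖z (-k)‖₊)) * (ehn s (ℓ-k) * ‖v (ℓ-k)‖₊)
            + (ehn s k * ((‖z k‖₊ : ℝ≥0∞) + ‖z (-k)‖₊)) * (ehn μ (ℓ-k) * ‖v (ℓ-k)‖₊)) := by
    intro ℓ k
    have hcoef : ehn (s+ρ) ℓ * (‖Rp k (ℓ-k)‖₊ : ℝ≥0∞)
        ≤ EK * (ehn μ k * ehn s (ℓ-k) + ehn s k * ehn μ (ℓ-k)) := by
      rw [ehn, ← enorm_eq_nnnorm, ← ofReal_norm,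
        ← ENNReal.ofReal_mul (rpnn _ _)]
      rw [← ofrhs]
      apply ENNReal.ofReal_le_ofReal
      have h := cb_p k (ℓ-k)
      rwa [show k + (ℓ - k) = ℓ by abel] at h
    calc ehn (s+ρ) ℓ * (‖Rp k (ℓ-k) * z k * v (ℓ-k)‖₊ : ℝ≥0∞)
        = (ehn (s+ρ) ℓ * ‖Rp k (ℓ-k)‖₊) * ((‖z k‖₊ : ℝ≥0∞) * ‖v (ℓ-k)‖₊) := by
          rw [nnnorm_mul, nnnorm_mul, ENNReal.coe_mul, ENNReal.coe_mul]; ring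
      _ ≤ (EK * (ehn μ k * ehn s (ℓ-k) + ehn s k * ehn μ (ℓ-k))) * ((‖z k‖₊ : ℝ≥0∞) * ‖v (ℓ-k)‖₊) :=
          mul_le_mul_left hcoef _
      _ = EK * ((ehn μ k * (‖z k‖₊:ℝ≥0∞)) * (ehn s (ℓ-k) * ‖v (ℓ-k)‖₊)
            + (ehn s k * (‖z k‖₊:ℝ≥0∞)) * (ehn μ (ℓ-k) * ‖v (ℓ-k)‖₊)) := by ring
      _ ≤ _ := by gcongr <;> exact le_self_add
  have ekey2 : ∀ ℓ k : ℤ × ℤ,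
      ehn (s+ρ) ℓ * (‖Rm (-k) (ℓ-k) * (starRingEnd ℂ) (z (-k)) * v (ℓ-k)‖₊ : ℝ≥0∞)
      ≤ EK * ((ehn μ k * ((‖z k‖₊ : ℝ≥0∞) + ‖z (-k)‖₊)) * (ehn s (ℓ-k) * ‖v (ℓ-k)‖₊)
            + (ehn s k * ((‖z k‖₊ : ℝ≥0∞) + ‖z (-k)‖₊)) * (ehn μ (ℓ-k) * ‖v (ℓ-k)‖₊)) := by
    intro ℓ k
    have hcoef : ehn (s+ρ) ℓ * (‖Rm (-k) (ℓ-k)‖₊ : ℝ≥0∞)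
        ≤ EK * (ehn μ k * ehn s (ℓ-k) + ehn s k * ehn μ (ℓ-k)) := by
      rw [ehn, ← enorm_eq_nnnorm, ← ofReal_norm,
        ← ENNReal.ofReal_mul (rpnn _ _)]
      rw [← ofrhs]
      apply ENNReal.ofReal_le_ofReal
      have h := cb_m (-k) (ℓ-k)
      rwa [neg_neg, show k + (ℓ - k) = ℓ by abel, hnrm_neg] at h
    calc ehn (s+ρ) ℓ * (‖Rm (-k) (ℓ-k) * (starRingEnd ℂ) (z (-k)) * v (ℓ-k)‖₊ : ℝ≥0∞)
        = (ehn (s+ρ) ℓ * ‖Rm (-k) (ℓ-k)‖₊) * ((‖z (-k)‖₊ : ℝ≥0∞) * ‖v (ℓ-k)‖₊) := by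
          rw [nnnorm_mul, nnnorm_mul, RCLike.nnnorm_conj, ENNReal.coe_mul, ENNReal.coe_mul]; ring
      _ ≤ (EK * (ehn μ k * ehn s (ℓ-k) + ehn s k * ehn μ (ℓ-k))) * ((‖z (-k)‖₊ : ℝ≥0∞) * ‖v (ℓ-k)‖₊) :=
          mul_le_mul_left hcoef _
      _ = EK * ((ehn μ k * (‖z (-k)‖₊:ℝ≥0∞)) * (ehn s (ℓ-k) * ‖v (ℓ-k)‖₊)
            + (ehn s k * (‖z (-k)‖₊:ℝ≥0∞)) * (ehn μ (ℓ-k) * ‖v (ℓ-k)‖₊)) := by ring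
      _ ≤ _ := by gcongr <;> exact le_add_self
  set W : (ℤ × ℤ) → ℂ := fun ℓ => ∑' k : ℤ × ℤ,
      (Rp k (ℓ - k) * z k * v (ℓ - k) +
        Rm k (ℓ + k) * (starRingEnd ℂ) (z k) * v (ℓ + k)) with hW
  set T1 : (ℤ × ℤ) → ℝ≥0∞ := fun ℓ => ∑' k : ℤ × ℤ,
      (ehn μ k * ((‖z k‖₊ : ℝ≥0∞) + ‖z (-k)‖₊)) * (ehn s (ℓ-k) * ‖v (ℓ-k)‖₊) with hT1
  set T2 : (ℤ × ℤ) → ℝ≥0∞ := fun ℓ => ∑' k : ℤ × ℤ,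
      (ehn s k * ((‖z k‖₊ : ℝ≥0∞) + ‖z (-k)‖₊)) * (ehn μ (ℓ-k) * ‖v (ℓ-k)‖₊) with hT2
  have key1 : ∀ ℓ : ℤ × ℤ, ehn (s+ρ) ℓ * (‖W ℓ‖₊ : ℝ≥0∞) ≤ 2 * EK * (T1 ℓ + T2 ℓ) := by
    intro ℓ
    have hWn : (‖W ℓ‖₊ : ℝ≥0∞)
        ≤ (∑' k : ℤ × ℤ, (‖Rp k (ℓ-k) * z k * v (ℓ-k)‖₊ : ℝ≥0∞))
          + ∑' k : ℤ × ℤ, (‖Rm k (ℓ+k) * (starRingEnd ℂ) (z k) * v (ℓ+k)‖₊ : ℝ≥0∞) := by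
      rw [hW]
      refine (enn_tsum_norm _).trans ?_
      rw [← ENNReal.tsum_add]
      refine ENNReal.tsum_le_tsum fun k => ?_
      have h := nnnorm_add_le (Rp k (ℓ-k) * z k * v (ℓ-k))
        (Rm k (ℓ+k) * (starRingEnd ℂ) (z k) * v (ℓ+k))
      exact_mod_cast h
    have hS2 : ∑' k : ℤ × ℤ, (‖Rm k (ℓ+k) * (starRingEnd ℂ) (z k) * v (ℓ+k)‖₊ : ℝ≥0∞)
        = ∑' k : ℤ × ℤ, (‖Rm (-k) (ℓ-k) * (starRingEnd ℂ) (z (-k)) * v (ℓ-k)‖₊ : ℝ≥0∞) := by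
      rw [← (Equiv.neg (ℤ × ℤ)).tsum_eq
        (fun k => (‖Rm k (ℓ+k) * (starRingEnd ℂ) (z k) * v (ℓ+k)‖₊ : ℝ≥0∞))]
      refine tsum_congr fun k => ?_
      simp only [Equiv.neg_apply]
      rw [show ℓ + -k = ℓ - k from (sub_eq_add_neg ℓ k).symm]
    have hsum1 : ∑' k : ℤ × ℤ, ehn (s+ρ) ℓ * (‖Rp k (ℓ-k) * z k * v (ℓ-k)‖₊ : ℝ≥0∞)
        ≤ EK * (T1 ℓ + T2 ℓ) := by
      refine (ENNReal.tsum_le_tsum (ekey1 ℓ)).trans (le_of_eq ?_)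
      simp_rw [mul_add (EK)]
      rw [ENNReal.tsum_add, ENNReal.tsum_mul_left, ENNReal.tsum_mul_left, ← mul_add]
    have hsum2 : ∑' k : ℤ × ℤ, ehn (s+ρ) ℓ * (‖Rm (-k) (ℓ-k) * (starRingEnd ℂ) (z (-k)) * v (ℓ-k)‖₊ : ℝ≥0∞)
        ≤ EK * (T1 ℓ + T2 ℓ) := by
      refine (ENNReal.tsum_le_tsum (ekey2 ℓ)).trans (le_of_eq ?_)
      simp_rw [mul_add (EK)]
      rw [ENNReal.tsum_add, ENNReal.tsum_mul_left, ENNReal.tsum_mul_left, ← mul_add]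
    calc ehn (s+ρ) ℓ * (‖W ℓ‖₊ : ℝ≥0∞)
        ≤ ehn (s+ρ) ℓ * ((∑' k : ℤ × ℤ, (‖Rp k (ℓ-k) * z k * v (ℓ-k)‖₊ : ℝ≥0∞))
            + ∑' k : ℤ × ℤ, (‖Rm k (ℓ+k) * (starRingEnd ℂ) (z k) * v (ℓ+k)‖₊ : ℝ≥0∞)) :=
          mul_le_mul_right hWn _
      _ = (∑' k : ℤ × ℤ, ehn (s+ρ) ℓ * (‖Rp k (ℓ-k) * z k * v (ℓ-k)‖₊ : ℝ≥0∞))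
            + ∑' k : ℤ × ℤ, ehn (s+ρ) ℓ * (‖Rm (-k) (ℓ-k) * (starRingEnd ℂ) (z (-k)) * v (ℓ-k)‖₊ : ℝ≥0∞) := by
          rw [mul_add, hS2, ENNReal.tsum_mul_left, ENNReal.tsum_mul_left]
      _ ≤ EK * (T1 ℓ + T2 ℓ) + EK * (T1 ℓ + T2 ℓ) := add_le_add hsum1 hsum2
      _ = 2 * EK * (T1 ℓ + T2 ℓ) := by ring
  -- square summation
  set SW := ∑' ℓ : ℤ × ℤ, (ehn (s+ρ) ℓ * (‖W ℓ‖₊ : ℝ≥0∞)) ^ (2:ℝ) with hSW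
  set ST1 := ∑' ℓ : ℤ × ℤ, T1 ℓ ^ (2:ℝ) with hST1d
  set ST2 := ∑' ℓ : ℤ × ℤ, T2 ℓ ^ (2:ℝ) with hST2d
  have L_le : SW ^ (1/2:ℝ) ≤ 4 * EK * (ST1 ^ (1/2:ℝ) + ST2 ^ (1/2:ℝ)) := by
    have sum1 : SW ≤ (4*EK) ^ (2:ℝ) * (ST1 + ST2) := by
      rw [hSW]
      calc ∑' ℓ : ℤ × ℤ, (ehn (s+ρ) ℓ * (‖W ℓ‖₊ : ℝ≥0∞)) ^ (2:ℝ)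
          ≤ ∑' ℓ : ℤ × ℤ, (2 * EK * (T1 ℓ + T2 ℓ)) ^ (2:ℝ) :=
            ENNReal.tsum_le_tsum fun ℓ => ENNReal.rpow_le_rpow (key1 ℓ) (by norm_num)
        _ ≤ ∑' ℓ : ℤ × ℤ, (2*EK) ^ (2:ℝ) * (4 * (T1 ℓ ^ (2:ℝ) + T2 ℓ ^ (2:ℝ))) := by
            refine ENNReal.tsum_le_tsum fun ℓ => ?_
            rw [ENNReal.mul_rpow_of_nonneg _ _ (by norm_num : (0:ℝ) ≤ 2)]
            exact mul_le_mul_right (esq_add_le _ _) _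
        _ = (2*EK) ^ (2:ℝ) * 4 * (ST1 + ST2) := by
            simp_rw [← mul_assoc]
            rw [ENNReal.tsum_mul_left, ENNReal.tsum_add]
        _ = (4*EK) ^ (2:ℝ) * (ST1 + ST2) := by
            rw [etwo, etwo]; ring
    calc SW ^ (1/2:ℝ) ≤ ((4*EK) ^ (2:ℝ) * (ST1 + ST2)) ^ (1/2:ℝ) := esqrt_mono sum1
      _ = 4 * EK * (ST1 + ST2) ^ (1/2:ℝ) := by
          rw [ENNReal.mul_rpow_of_nonneg _ _ (by norm_num : (0:ℝ) ≤ 1/2), ehalf]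
      _ ≤ 4 * EK * (ST1 ^ (1/2:ℝ) + ST2 ^ (1/2:ℝ)) := mul_le_mul_right (esqrt_add _ _) _
  -- bounds on ST1, ST2
  have bT1 : ST1 ^ (1/2:ℝ) ≤ (Lam * (3 * sob' (2+μ) z)) * sob' s v := by
    have h1 : ST1 ≤ (∑' k : ℤ × ℤ, ehn μ k * ((‖z k‖₊ : ℝ≥0∞) + ‖z (-k)‖₊)) ^ (2:ℝ)
        * ∑' j : ℤ × ℤ, (ehn s j * (‖v j‖₊ : ℝ≥0∞)) ^ (2:ℝ) := by
      rw [hST1d]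
      exact conv_l2 (fun k => ehn μ k * ((‖z k‖₊ : ℝ≥0∞) + ‖z (-k)‖₊))
        (fun j => ehn s j * (‖v j‖₊ : ℝ≥0∞))
    have h2 : ∑' k : ℤ × ℤ, ehn μ k * ((‖z k‖₊ : ℝ≥0∞) + ‖z (-k)‖₊)
        ≤ Lam * (3 * sob' (2+μ) z) := by
      refine (l1A (by ring : μ + 2 = 2 + μ) _).trans ?_
      exact mul_le_mul_right (Asq_le (2+μ) z) _
    calc ST1 ^ (1/2:ℝ)
        ≤ ((∑' k : ℤ × ℤ, ehn μ k * ((‖z k‖₊ : ℝ≥0∞) + ‖z (-k)‖₊)) ^ (2:ℝ)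
            * ∑' j : ℤ × ℤ, (ehn s j * (‖v j‖₊ : ℝ≥0∞)) ^ (2:ℝ)) ^ (1/2:ℝ) := esqrt_mono h1
      _ = (∑' k : ℤ × ℤ, ehn μ k * ((‖z k‖₊ : ℝ≥0∞) + ‖z (-k)‖₊)) * sob' s v := by
          rw [ENNReal.mul_rpow_of_nonneg _ _ (by norm_num : (0:ℝ) ≤ 1/2), ehalf, sob'_def]
      _ ≤ (Lam * (3 * sob' (2+μ) z)) * sob' s v := mul_le_mul_left h2 _
  have bT2 : ST2 ^ (1/2:ℝ) ≤ (Lam * sob' (2+μ) v) * (3 * sob' s z) := by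
    have hT2' : ∀ ℓ : ℤ × ℤ, T2 ℓ = ∑' k : ℤ × ℤ,
        (ehn μ k * (‖v k‖₊ : ℝ≥0∞)) * (ehn s (ℓ-k) * ((‖z (ℓ-k)‖₊ : ℝ≥0∞) + ‖z (-(ℓ-k))‖₊)) := by
      intro ℓ
      simp only [hT2]
      rw [← (Equiv.subLeft ℓ).tsum_eq (fun k => (ehn s k * ((‖z k‖₊ : ℝ≥0∞) + ‖z (-k)‖₊))
        * (ehn μ (ℓ-k) * (‖v (ℓ-k)‖₊ : ℝ≥0∞)))]
      refine tsum_congr fun k => ?_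
      simp only [Equiv.subLeft_apply]
      rw [show ℓ - (ℓ - k) = k by abel]
      ring
    have h1 : ST2 ≤ (∑' k : ℤ × ℤ, ehn μ k * (‖v k‖₊ : ℝ≥0∞)) ^ (2:ℝ)
        * ∑' j : ℤ × ℤ, (ehn s j * ((‖z j‖₊ : ℝ≥0∞) + ‖z (-j)‖₊)) ^ (2:ℝ) := by
      rw [hST2d]
      rw [tsum_congr fun ℓ => congrArg (· ^ (2:ℝ)) (hT2' ℓ)]
      exact conv_l2 (fun k => ehn μ k * (‖v k‖₊ : ℝ≥0∞))
        (fun j => ehn s j * ((‖z j‖₊ : ℝ≥0∞) + ‖z (-j)‖₊))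
    have h2 : ∑' k : ℤ × ℤ, ehn μ k * (‖v k‖₊ : ℝ≥0∞) ≤ Lam * sob' (2+μ) v := by
      refine (l1A (by ring : μ + 2 = 2 + μ) _).trans ?_
      rw [sob'_def]
    calc ST2 ^ (1/2:ℝ)
        ≤ ((∑' k : ℤ × ℤ, ehn μ k * (‖v k‖₊ : ℝ≥0∞)) ^ (2:ℝ)
            * ∑' j : ℤ × ℤ, (ehn s j * ((‖z j‖₊ : ℝ≥0∞) + ‖z (-j)‖₊)) ^ (2:ℝ)) ^ (1/2:ℝ) :=
          esqrt_mono h1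
      _ = (∑' k : ℤ × ℤ, ehn μ k * (‖v k‖₊ : ℝ≥0∞))
            * (∑' j : ℤ × ℤ, (ehn s j * ((‖z j‖₊ : ℝ≥0∞) + ‖z (-j)‖₊)) ^ (2:ℝ)) ^ (1/2:ℝ) := by
          rw [ENNReal.mul_rpow_of_nonneg _ _ (by norm_num : (0:ℝ) ≤ 1/2), ehalf]
      _ ≤ (Lam * sob' (2+μ) v) * (3 * sob' s z) := mul_le_mul' h2 (Asq_le s z)
  -- summability at exponent 2+μ and conversions
  have habs_nn : ∀ (w : ℤ × ℤ → ℂ) (k : ℤ × ℤ), 0 ≤ ‖w k‖ ^ 2 :=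
    fun w k => pow_nonneg (norm_nonneg _) 2
  have hcomp : ∀ w : ℤ × ℤ → ℂ, Summable (fun k => hnrm k ^ (2*s) * ‖w k‖ ^ 2) →
      Summable (fun k => hnrm k ^ (2*(2+μ)) * ‖w k‖ ^ 2) := by
    intro w hw
    refine hw.of_nonneg_of_le (fun k => mul_nonneg (rpnn _ _) (habs_nn w k)) (fun k => ?_)
    exact mul_le_mul_of_nonneg_right
      (Real.rpow_le_rpow_of_exponent_le (one_le_hnrm k) (by linarith)) (habs_nn w k)
  have ez2 : sob' (2+μ) z = ENNReal.ofReal (sob (2+μ) z) := sob'_eq _ _ (hcomp z hzs)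
  have ev2 : sob' (2+μ) v = ENNReal.ofReal (sob (2+μ) v) := sob'_eq _ _ (hcomp v hvs)
  have ezs : sob' s z = ENNReal.ofReal (sob s z) := sob'_eq _ _ hzs
  have evs : sob' s v = ENNReal.ofReal (sob s v) := sob'_eq _ _ hvs
  have sobnn : ∀ (t : ℝ) (w : ℤ × ℤ → ℂ), 0 ≤ sob t w := fun t w => Real.sqrt_nonneg _
  have hLam : Lam = ENNReal.ofReal Lam.toReal := (ENNReal.ofReal_toReal Lam_ne_top).symm
  have main_enn : sob' (s+ρ) W ≤ ENNReal.ofReal ((12 * Kc * Lam.toReal)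
      * (sob (2+μ) z * sob s v + sob s z * sob (2+μ) v)) := by
    calc sob' (s+ρ) W = SW ^ (1/2:ℝ) := by rw [sob'_def, ← hSW]
      _ ≤ 4 * EK * (ST1 ^ (1/2:ℝ) + ST2 ^ (1/2:ℝ)) := L_le
      _ ≤ 4 * EK * ((Lam * (3 * sob' (2+μ) z)) * sob' s v + (Lam * sob' (2+μ) v) * (3 * sob' s z)) :=
          mul_le_mul_right (add_le_add bT1 bT2) _
      _ = 12 * EK * Lam * (sob' (2+μ) z * sob' s v + sob' s z * sob' (2+μ) v) := by ring
      _ = ENNReal.ofReal ((12 * Kc * Lam.toReal)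
            * (sob (2+μ) z * sob s v + sob s z * sob (2+μ) v)) := by
          have h12 : ENNReal.ofReal (12:ℝ) = (12:ℝ≥0∞) := by norm_num
          have eX : ENNReal.ofReal (sob (2+μ) z * sob s v + sob s z * sob (2+μ) v)
              = ENNReal.ofReal (sob (2+μ) z) * ENNReal.ofReal (sob s v)
                + ENNReal.ofReal (sob s z) * ENNReal.ofReal (sob (2+μ) v) := by
            rw [ENNReal.ofReal_add (mul_nonneg (sobnn _ _) (sobnn _ _))
                (mul_nonneg (sobnn _ _) (sobnn _ _)),
              ENNReal.ofReal_mul (sobnn _ _), ENNReal.ofReal_mul (sobnn _ _)]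
          have eC : ENNReal.ofReal ((12 * Kc * Lam.toReal)
                * (sob (2+μ) z * sob s v + sob s z * sob (2+μ) v))
              = ENNReal.ofReal (12 * Kc * Lam.toReal)
                * ENNReal.ofReal (sob (2+μ) z * sob s v + sob s z * sob (2+μ) v) :=
            ENNReal.ofReal_mul (mul_nonneg (mul_nonneg (by norm_num) hKc0.le) hLamReal)
          have eK : ENNReal.ofReal (12 * Kc * Lam.toReal) = 12 * ENNReal.ofReal Kc * Lam := by
            rw [ENNReal.ofReal_mul (mul_nonneg (by norm_num) hKc0.le),
              ENNReal.ofReal_mul (by norm_num : (0:ℝ) ≤ 12),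
              ENNReal.ofReal_toReal Lam_ne_top, h12]
          rw [eC, eK, eX, ez2, ev2, ezs, evs, hEK]
  -- finiteness and conversion of the left-hand side
  have hSWfin : SW ≠ ⊤ := by
    intro htop
    have h1 : sob' (s+ρ) W = ⊤ := by
      rw [sob'_def, ← hSW, htop]
      exact ENNReal.top_rpow_of_pos (by norm_num)
    rw [h1] at main_enn
    exact ENNReal.ofReal_ne_top (top_le_iff.mp main_enn)
  have hsumW : Summable (fun ℓ => hnrm ℓ ^ (2*(s+ρ)) * ‖W ℓ‖ ^ 2) := by
    apply summable_of_ofReal (fun ℓ => mul_nonneg (rpnn _ _) (habs_nn W ℓ))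
    have he : ∑' ℓ : ℤ × ℤ, ENNReal.ofReal (hnrm ℓ ^ (2*(s+ρ)) * ‖W ℓ‖ ^ 2) = SW := by
      rw [hSW]
      exact tsum_congr fun ℓ => (sob'_pointwise _ W ℓ).symm
    rw [he]
    exact hSWfin
  have eW : sob' (s+ρ) W = ENNReal.ofReal (sob (s+ρ) W) := sob'_eq _ _ hsumW
  rw [eW] at main_enn
  have hXnn : 0 ≤ sob (2+μ) z * sob s v + sob s z * sob (2+μ) v :=
    add_nonneg (mul_nonneg (sobnn _ _) (sobnn _ _)) (mul_nonneg (sobnn _ _) (sobnn _ _))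
  have hmono : (12 * Kc * Lam.toReal) * (sob (2+μ) z * sob s v + sob s z * sob (2+μ) v)
      ≤ (12 * Kc * Lam.toReal + 1) * (sob (2+μ) z * sob s v + sob s z * sob (2+μ) v) :=
    mul_le_mul_of_nonneg_right (by linarith) hXnn
  have final := main_enn.trans (ENNReal.ofReal_le_ofReal hmono)
  exact (ENNReal.ofReal_le_ofReal_iff
    (mul_nonneg (by positivity) hXnn)).mp final
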